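/- For every n ≥ 1, the number of n-periodic points of the Motzkin shift M(M,N) equals ∑_{i=0}^{n−1} binom(n, i) N^i p_{n−i}(D_M) + N^n, where p_m(D_M) is the number of m-periodic points of the Dyck shift on 2M symbols. -/

import Mathlib

open PowerSeries

namespace MotzkinPaper

/-- The alphabet of the Motzkin shift: `M` left brackets `λ_i`, `M` right brackets `ρ_i`,
`N` neutral symbols `1_j`. -/
inductive Letter (M N : ℕ) : Type where
  | lam (i : Fin M)
  | rho (i : Fin M)
  | neu (j : Fin N)
  deriving DecidableEq

/-- Elements of the Motzkin monoid `M(M,N)`: `none` is the zero element; a nonzero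
element is (the reduced word) `ρ_{r₁}⋯ρ_{rₖ} λ_{l₁}⋯λ_{lₘ}`, recorded as the pair
`(r, l)` with `l` stored in reverse order.  `some ([], [])` is the identity `1`. -/
abbrev El (M : ℕ) : Type := Option (List (Fin M) × List (Fin M))

/-- The identity of the Motzkin monoid. -/
def one (M : ℕ) : El M := some ([], [])

/-- Multiply a (reduced, nonzero-or-zero) monoid element by a generator, implementing
the relations `λ_i ρ_i = 1`, `λ_i ρ_j = 0 (i ≠ j)`, `1_j` neutral. -/
def step (M N : ℕ) : El M → Letter M N → El M
  | none, _ => none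
  | some (r, l), .neu _ => some (r, l)
  | some (r, l), .lam i => some (r, i :: l)
  | some (r, l), .rho j =>
      match l with
      | [] => some (r ++ [j], [])
      | i :: t => if i = j then some (r, t) else none

/-- `red w` is the image of the word `w` in the Motzkin monoid `M(M,N)`. -/
def red (M N : ℕ) (w : List (Letter M N)) : El M := w.foldl (step M N) (one M)

/-- The Motzkin code `E`: words of the form `λ_i v ρ_i` with `red v = 1`. -/
def codeE (M N : ℕ) (w : List (Letter M N)) : Prop :=
  ∃ (i : Fin M) (v : List (Letter M N)),
    w = Letter.lam i :: (v ++ [Letter.rho i]) ∧ red M N v = one M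

/-- `e M N n`: the number of words of length `n` in the Motzkin code `E`. -/
noncomputable def e (M N n : ℕ) : ℕ :=
  Nat.card {w : Fin n → Letter M N // codeE M N (List.ofFn w)}

/-- The generating function `f(E,z) = ∑ₙ e_n zⁿ` of the Motzkin code. -/
noncomputable def fE (M N : ℕ) : PowerSeries ℚ := PowerSeries.mk fun n => (e M N n : ℚ)

end MotzkinPaper

namespace MotzkinPaper

/-- Membership in the Motzkin shift `M(M,N)`: a bi-infinite sequence all of whose
finite subwords have nonzero reduction in the Motzkin monoid.  For `N = 0` this is
the Dyck shift `D_M`. -/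
def inMotzkinShift (M N : ℕ) (x : ℤ → Letter M N) : Prop :=
  ∀ (i : ℤ) (m : ℕ), red M N (List.ofFn fun k : Fin m => x (i + k)) ≠ none

/-- `p M N n`: the number of `n`-periodic points of the Motzkin shift `M(M,N)`. -/
noncomputable def p (M N n : ℕ) : ℕ :=
  Nat.card {x : ℤ → Letter M N // inMotzkinShift M N x ∧ ∀ k : ℤ, x (k + n) = x k}

end MotzkinPaper


namespace MotzkinPaper

variable {M N : ℕ}

/-- Whether a letter is a neutral symbol. -/
def isNeu {M N : ℕ} : Letter M N → Bool
  | .neu _ => true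
  | _ => false

def getNeu {M N : ℕ} : (a : Letter M N) → isNeu a = true → Fin N
  | .neu j, _ => j
  | .lam _, h => Bool.noConfusion h
  | .rho _, h => Bool.noConfusion h

def deDyck {M N : ℕ} : (a : Letter M N) → isNeu a = false → Letter M 0
  | .lam i, _ => .lam i
  | .rho i, _ => .rho i
  | .neu _, h => Bool.noConfusion h

def iota {M N : ℕ} : Letter M 0 → Letter M N
  | .lam i => .lam i
  | .rho i => .rho i
  | .neu j => j.elim0

lemma isNeu_iota (a : Letter M 0) : isNeu (iota (N := N) a) = false := by
  cases a with
  | lam i => rfl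
  | rho i => rfl
  | neu j => exact j.elim0

lemma iota_deDyck (a : Letter M N) (h : isNeu a = false) : iota (deDyck a h) = a := by
  cases a with
  | lam i => rfl
  | rho i => rfl
  | neu j => exact Bool.noConfusion h

lemma deDyck_iota (a : Letter M 0) (h : isNeu (iota (N := N) a) = false) :
    deDyck (iota (N := N) a) h = a := by
  cases a with
  | lam i => rfl
  | rho i => rfl
  | neu j => exact j.elim0

lemma neu_getNeu (a : Letter M N) (h : isNeu a = true) : Letter.neu (getNeu a h) = a := by
  cases a with
  | lam i => exact Bool.noConfusion h
  | rho i => exact Bool.noConfusion h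
  | neu j => rfl

def letterEquiv (M N : ℕ) : Letter M N ≃ (Fin M ⊕ Fin M ⊕ Fin N) where
  toFun a := match a with
    | .lam i => .inl i
    | .rho i => .inr (.inl i)
    | .neu j => .inr (.inr j)
  invFun s := match s with
    | .inl i => .lam i
    | .inr (.inl i) => .rho i
    | .inr (.inr j) => .neu j
  left_inv a := by cases a <;> rfl
  right_inv s := by rcases s with i | i | j <;> rfl

noncomputable instance : Fintype (Letter M N) := Fintype.ofEquiv _ (letterEquiv M N).symm

lemma step_neu (s : El M) (j : Fin N) : step M N s (.neu j) = s := by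
  rcases s with _ | ⟨r, l⟩ <;> rfl

lemma step_none (a : Letter M N) : step M N none a = none := by cases a <;> rfl

lemma foldl_step_none (l : List (Letter M N)) : l.foldl (step M N) none = none := by
  induction l with
  | nil => rfl
  | cons a t ih => simpa [step_none] using ih

lemma foldl_filter (l : List (Letter M N)) (s : El M) :
    l.foldl (step M N) s = (l.filter fun a => !isNeu a).foldl (step M N) s := by
  induction l generalizing s with
  | nil => rfl
  | cons a t ih =>
    cases ha : isNeu a with
    | true =>
      have hs : step M N s a = s := by
        cases a with
        | lam i => exact Bool.noConfusion ha
        | rho i => exact Bool.noConfusion ha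
        | neu j => exact step_neu s j
      simp [List.filter_cons, ha, List.foldl_cons, hs, ih]
    | false => simp [List.filter_cons, ha, List.foldl_cons, ih]

lemma red_filter (l : List (Letter M N)) :
    red M N l = red M N (l.filter fun a => !isNeu a) := foldl_filter l _

lemma foldl_map_iota (l : List (Letter M 0)) (s : El M) :
    (l.map (iota (N := N))).foldl (step M N) s = l.foldl (step M 0) s := by
  induction l generalizing s with
  | nil => rfl
  | cons a t ih =>
    have hst : step M N s (iota a) = step M 0 s a := by
      rcases s with _ | ⟨r, ll⟩ <;> cases a with
      | lam i => rfl
      | rho i => rfl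
      | neu j => exact j.elim0
    simp [List.foldl_cons, hst, ih]

lemma red_map_iota (l : List (Letter M 0)) :
    red M N (l.map (iota (N := N))) = red M 0 l := foldl_map_iota l _

lemma one_ne_none : one M ≠ none := by simp [one]


def pnat (n : ℕ) (hn : 0 < n) (w : Fin n → Letter M N) (j : ℕ) : Letter M N :=
  w ⟨j % n, Nat.mod_lt _ hn⟩

def wrd (n : ℕ) (hn : 0 < n) (w : Fin n → Letter M N) (i L : ℕ) : List (Letter M N) :=
  List.ofFn fun k : Fin L => pnat n hn w (i + k)

def AdmN (n : ℕ) (hn : 0 < n) (w : Fin n → Letter M N) : Prop :=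
  ∀ i L, red M N (wrd n hn w i L) ≠ none

def perZ (n : ℕ) (hn : 0 < n) (w : Fin n → Letter M N) (z : ℤ) : Letter M N :=
  w ⟨(z % n).toNat, by
    have hn' : (0:ℤ) < n := by exact_mod_cast hn
    have h1 : 0 ≤ z % n := Int.emod_nonneg z (by omega)
    have h2 : z % n < n := Int.emod_lt_of_pos z hn'
    omega⟩

lemma perZ_natCast (n : ℕ) (hn : 0 < n) (w : Fin n → Letter M N) (j : ℕ) :
    perZ n hn w (j : ℤ) = pnat n hn w j := by
  unfold perZ pnat
  refine congrArg w (Fin.ext ?_)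
  show ((j:ℤ) % (n:ℤ)).toNat = j % n
  omega

lemma perZ_add_nat (n : ℕ) (hn : 0 < n) (w : Fin n → Letter M N) (z : ℤ) (t : ℕ) :
    perZ n hn w (z + n * t) = perZ n hn w z := by
  unfold perZ
  congr 2
  rw [Int.add_mul_emod_self_left]

lemma pnat_mod (n : ℕ) (hn : 0 < n) (w : Fin n → Letter M N) (j : ℕ) :
    pnat n hn w (j % n) = pnat n hn w j := by
  unfold pnat
  exact congrArg w (Fin.ext (Nat.mod_mod_of_dvd j dvd_rfl))

lemma pnat_add_n (n : ℕ) (hn : 0 < n) (w : Fin n → Letter M N) (j : ℕ) :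
    pnat n hn w (j + n) = pnat n hn w j := by
  unfold pnat; congr 1; ext; simp [Nat.add_mod_right]

lemma inMotzkinShift_iff_AdmN (n : ℕ) (hn : 0 < n) (w : Fin n → Letter M N) :
    inMotzkinShift M N (perZ n hn w) ↔ AdmN n hn w := by
  constructor
  · intro h i L
    have := h (i : ℤ) L
    have hw : (List.ofFn fun k : Fin L => perZ n hn w ((i:ℤ) + k)) = wrd n hn w i L := by
      unfold wrd
      refine congrArg List.ofFn (funext fun k => ?_)
      have : ((i:ℤ) + (k:ℕ)) = ((i + (k:ℕ) : ℕ) : ℤ) := by push_cast; ring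
      rw [this, perZ_natCast]
    rwa [hw] at this
  · intro h i L
    set t : ℕ := i.natAbs with ht
    have hnn : (0:ℤ) ≤ i + n * t := by
      have h1 : (0:ℤ) ≤ i + t := by
        rcases Int.natAbs_eq i with h | h
        · omega
        · omega
      have h2 : (t:ℤ) ≤ n * t := by
        have : (1:ℤ) ≤ n := by exact_mod_cast hn
        nlinarith
      omega
    set j : ℕ := (i + n * t).toNat with hj
    have hji : (j : ℤ) = i + n * t := Int.toNat_of_nonneg hnn
    have hw : (List.ofFn fun k : Fin L => perZ n hn w (i + k)) = wrd n hn w j L := by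
      unfold wrd
      refine congrArg List.ofFn (funext fun k => ?_)
      have e1 : perZ n hn w (i + k) = perZ n hn w ((i + k) + n * t) := (perZ_add_nat ..).symm
      have e2 : ((i + (k:ℕ)) + n * t) = ((j + (k:ℕ) : ℕ) : ℤ) := by push_cast; omega
      rw [e1, e2, perZ_natCast]
    rw [hw]
    exact h j L

lemma periodic_shift (x : ℤ → Letter M N) (n : ℕ) (hx : ∀ k : ℤ, x (k + n) = x k)
    (z : ℤ) (t : ℤ) : x (z + n * t) = x z := by
  induction t using Int.induction_on with
  | zero => simp
  | succ t ih =>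
    have : z + n * ((t:ℤ) + 1) = (z + n * t) + n := by ring
    rw [this, hx, ih]
  | pred t ih =>
    have h1 := hx (z + n * (-(t:ℤ) - 1))
    have h2 : z + n * (-(t:ℤ) - 1) + n = z + n * (-(t:ℤ)) := by ring
    rw [h2] at h1
    exact h1.symm.trans ih

lemma perZ_restrict (n : ℕ) (hn : 0 < n) (x : ℤ → Letter M N)
    (hx : ∀ k : ℤ, x (k + n) = x k) :
    perZ n hn (fun i : Fin n => x i) = x := by
  funext z
  unfold perZ
  show x ((z % n).toNat : ℤ) = x z
  have hn' : (0:ℤ) < n := by exact_mod_cast hn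
  have h1 : 0 ≤ z % n := Int.emod_nonneg z (by omega)
  rw [Int.toNat_of_nonneg h1]
  have : z % n + n * (z / n) = z := Int.emod_add_mul_ediv z n
  calc x (z % n) = x (z % n + n * (z / n)) := (periodic_shift x n hx _ _).symm
    _ = x z := by rw [this]

lemma p_eq_card_AdmN (n : ℕ) (hn : 0 < n) :
    p M N n = Nat.card {w : Fin n → Letter M N // AdmN n hn w} := by
  apply Nat.card_congr
  refine
    { toFun := fun x => ⟨fun i => x.1 i, ?_⟩
      invFun := fun w => ⟨perZ n hn w.1, ?_, ?_⟩
      left_inv := ?_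
      right_inv := ?_ }
  · have := x.2.1
    rw [← perZ_restrict n hn x.1 x.2.2] at this
    exact (inMotzkinShift_iff_AdmN n hn _).mp this
  · exact (inMotzkinShift_iff_AdmN n hn _).mpr w.2
  · intro k
    have := perZ_add_nat n hn w.1 k 1
    simpa using this
  · intro x
    apply Subtype.ext
    exact perZ_restrict n hn x.1 x.2.2
  · intro w
    apply Subtype.ext
    funext i
    show perZ n hn w.1 (i : ℤ) = w.1 i
    rw [perZ_natCast]
    unfold pnat
    exact congrArg w.1 (Fin.ext (Nat.mod_eq_of_lt i.2))


section Bridge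

variable (n : ℕ) (hn : 0 < n) (w : Fin n → Letter M N)

/-- Number of non-neutral positions among the first `j` positions of the periodic word. -/
def cnt (j : ℕ) : ℕ :=
  ((Finset.range j).filter fun k => isNeu (pnat n hn w k) = false).card

lemma cnt_zero : cnt n hn w 0 = 0 := by simp [cnt]

lemma cnt_succ (j : ℕ) :
    cnt n hn w (j + 1) =
      cnt n hn w j + (if isNeu (pnat n hn w j) = false then 1 else 0) := by
  unfold cnt
  rw [Finset.range_add_one, Finset.filter_insert]
  split
  · rw [Finset.card_insert_of_notMem (by simp)]
  · simp

lemma cnt_mono : Monotone (cnt n hn w) := by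
  intro a b hab
  exact Finset.card_le_card
    (Finset.filter_subset_filter _ (Finset.range_subset_range.mpr hab))

lemma pnat_lt_n (j : ℕ) (hjn : j < n) : pnat n hn w j = w ⟨j, hjn⟩ :=
  congrArg w (Fin.ext (Nat.mod_eq_of_lt hjn))

variable (S : Finset (Fin n)) (hS : ∀ i, isNeu (w i) = false ↔ i ∈ S)

include hS in
lemma cnt_eq_card_filter (j : ℕ) (hj : j ≤ n) :
    cnt n hn w j = (S.filter fun s : Fin n => (s : ℕ) < j).card := by
  unfold cnt
  refine Finset.card_bij' (fun k hk => (⟨k, by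
      have := Finset.mem_range.mp (Finset.mem_filter.mp hk).1; omega⟩ : Fin n))
    (fun s _ => (s : ℕ)) ?_ ?_ ?_ ?_
  · intro k hk
    obtain ⟨hk1, hk2⟩ := Finset.mem_filter.mp hk
    have hklt : k < j := Finset.mem_range.mp hk1
    rw [Finset.mem_filter]
    have hkn : k < n := by omega
    refine ⟨(hS _).mp ?_, hklt⟩
    rwa [← pnat_lt_n n hn w k hkn]
  · intro s hs
    obtain ⟨hs1, hs2⟩ := Finset.mem_filter.mp hs
    rw [Finset.mem_filter, Finset.mem_range]
    refine ⟨hs2, ?_⟩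
    rw [pnat_lt_n n hn w (s : ℕ) s.2]
    have : (⟨(s : ℕ), s.2⟩ : Fin n) = s := Fin.ext rfl
    rw [this]
    exact (hS s).mpr hs1
  · intro k hk; rfl
  · intro s hs; exact Fin.ext rfl

include hS in
lemma cnt_n_eq : cnt n hn w n = S.card := by
  rw [cnt_eq_card_filter n hn w S hS n le_rfl]
  congr 1
  exact Finset.filter_true_of_mem fun s _ => (s : Fin n).2

include hS in
lemma cnt_add_n (j : ℕ) : cnt n hn w (j + n) = cnt n hn w j + S.card := by
  induction j with
  | zero => simpa [cnt_zero] using cnt_n_eq n hn w S hS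
  | succ j ih =>
    have h1 : j + 1 + n = (j + n) + 1 := by omega
    rw [h1, cnt_succ, ih, cnt_succ]
    rw [pnat_add_n]
    ring

include hS in
lemma cnt_add_mul (j q : ℕ) : cnt n hn w (j + n * q) = cnt n hn w j + S.card * q := by
  induction q with
  | zero => simp
  | succ q ih =>
    have h1 : j + n * (q + 1) = (j + n * q) + n := by ring
    rw [h1, cnt_add_n n hn w S hS, ih]
    ring

variable {m : ℕ} (hcard : S.card = m)

include hS in
lemma cnt_sigma (a : Fin m) :
    cnt n hn w ((S.orderIsoOfFin hcard a : Fin n) : ℕ) = a := by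
  set σ := S.orderIsoOfFin hcard with hσ
  have hle : ((σ a : Fin n) : ℕ) ≤ n := le_of_lt (σ a : Fin n).2
  rw [cnt_eq_card_filter n hn w S hS _ hle]
  have hcard2 : (S.filter fun s : Fin n => (s : ℕ) < ((σ a : Fin n) : ℕ)).card
      = (Finset.range (a : ℕ)).card := by
    refine Finset.card_bij' (fun s hs => ((σ.symm ⟨s, (Finset.mem_filter.mp hs).1⟩ : Fin m) : ℕ))
      (fun b hb => ((σ ⟨b, by have := Finset.mem_range.mp hb; omega⟩ : { x // x ∈ S }) : Fin n))
      ?_ ?_ ?_ ?_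
    · intro s hs
      obtain ⟨hs1, hs2⟩ := Finset.mem_filter.mp hs
      rw [Finset.mem_range]
      have hlt : (⟨s, hs1⟩ : { x // x ∈ S }) < σ a := by
        rw [Subtype.mk_lt_mk]
        exact hs2
      have := (σ.symm.lt_iff_lt (x := ⟨s, hs1⟩) (y := σ a)).mpr hlt
      rwa [OrderIso.symm_apply_apply] at this
    · intro b hb
      have hb' : b < (a : ℕ) := Finset.mem_range.mp hb
      rw [Finset.mem_filter]
      refine ⟨(σ _).2, ?_⟩
      have : (⟨b, by omega⟩ : Fin m) < a := by
        rw [Fin.mk_lt_mk]; exact hb'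
      have := (σ.lt_iff_lt).mpr this
      exact this
    · intro s hs
      simp only [Fin.eta]
      rw [OrderIso.apply_symm_apply]
    · intro b hb
      simp only [Subtype.coe_eta]
      rw [OrderIso.symm_apply_apply]
  rw [hcard2, Finset.card_range]

variable (u : Fin m → Letter M N) (hu : ∀ a, u a = w (S.orderIsoOfFin hcard a))
  (hm : 0 < m)

include hS hu in
lemma key_fact (j : ℕ) (hj : isNeu (pnat n hn w j) = false) :
    pnat n hn w j = pnat m hm u (cnt n hn w j) := by
  set σ := S.orderIsoOfFin hcard with hσ
  have main : ∀ q r, r < n → isNeu (pnat n hn w (r + n * q)) = false →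
      pnat n hn w (r + n * q) = pnat m hm u (cnt n hn w (r + n * q)) := by
    intro q
    induction q with
    | zero =>
      intro r hr hneu
      simp only [Nat.mul_zero, Nat.add_zero] at hneu ⊢
      rw [pnat_lt_n n hn w r hr] at hneu ⊢
      have hmem : (⟨r, hr⟩ : Fin n) ∈ S := (hS _).mp hneu
      set a : Fin m := σ.symm ⟨⟨r, hr⟩, hmem⟩ with ha
      have hσa : ((σ a : Fin n) : ℕ) = r := by
        rw [ha, OrderIso.apply_symm_apply]
      have hc : cnt n hn w r = (a : ℕ) := by
        rw [← hσa]; exact cnt_sigma n hn w S hS hcard a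
      rw [hc]
      have : pnat m hm u (a : ℕ) = u a := by
        unfold pnat
        exact congrArg u (Fin.ext (Nat.mod_eq_of_lt a.2))
      rw [this, hu]
      rw [ha, OrderIso.apply_symm_apply]
    | succ q ih =>
      intro r hr hneu
      have h1 : r + n * (q + 1) = (r + n * q) + n := by ring
      rw [h1, pnat_add_n] at hneu ⊢
      rw [cnt_add_n n hn w S hS, hcard, pnat_add_n]
      exact ih r hr hneu
  have hj' : j = j % n + n * (j / n) := by
    rw [Nat.mod_add_div]
  rw [hj'] at hj ⊢
  exact main (j / n) (j % n) (Nat.mod_lt _ hn) hj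

lemma wrd_succ (n' : ℕ) (hn' : 0 < n') (w' : Fin n' → Letter M N) (i L : ℕ) :
    wrd n' hn' w' i (L + 1) = wrd n' hn' w' i L ++ [pnat n' hn' w' (i + L)] := by
  unfold wrd
  rw [List.ofFn_succ', List.concat_eq_append]
  rfl

include hS hu in
lemma filter_wrd (i L : ℕ) :
    (wrd n hn w i L).filter (fun a => !isNeu a)
      = wrd m hm u (cnt n hn w i) (cnt n hn w (i + L) - cnt n hn w i) := by
  induction L with
  | zero =>
    simp [wrd]
  | succ L ih =>
    rw [wrd_succ, List.filter_append, ih]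
    have hiL : i + (L + 1) = (i + L) + 1 := rfl
    cases hlast : isNeu (pnat n hn w (i + L)) with
    | true =>
      have hc : cnt n hn w (i + (L + 1)) = cnt n hn w (i + L) := by
        rw [hiL, cnt_succ, if_neg (by simp [hlast])]
        omega
      rw [hc]
      simp [hlast]
      
    | false =>
      have hc : cnt n hn w (i + (L + 1)) = cnt n hn w (i + L) + 1 := by
        rw [hiL, cnt_succ, if_pos hlast]
      have hmono : cnt n hn w i ≤ cnt n hn w (i + L) :=
        cnt_mono n hn w (Nat.le_add_right i L)
      have hΔ : cnt n hn w (i + (L + 1)) - cnt n hn w i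
          = (cnt n hn w (i + L) - cnt n hn w i) + 1 := by omega
      rw [hΔ, wrd_succ]
      have hsum : cnt n hn w i + (cnt n hn w (i + L) - cnt n hn w i)
          = cnt n hn w (i + L) := by omega
      rw [hsum]
      have hkey := key_fact n hn w S hS hcard u hu hm (i + L) hlast
      have hfil : List.filter (fun a => !isNeu a) [pnat n hn w (i + L)]
          = [pnat n hn w (i + L)] := by simp [hlast]
      rw [hfil, hkey]

end Bridge

lemma nat_ivt (g : ℕ → ℕ) (h0 : g 0 = 0) (hstep : ∀ L, g (L + 1) ≤ g L + 1) :
    ∀ T t, t ≤ g T → ∃ L, g L = t := by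
  intro T
  induction T with
  | zero => intro t ht; exact ⟨0, by omega⟩
  | succ T ih =>
    intro t ht
    by_cases h : t ≤ g T
    · exact ih t h
    · exact ⟨T + 1, by have := hstep T; omega⟩

lemma AdmN_iff_AdmN_sub (n : ℕ) (hn : 0 < n) (w : Fin n → Letter M N)
    (S : Finset (Fin n)) (hS : ∀ i, isNeu (w i) = false ↔ i ∈ S)
    {m : ℕ} (hcard : S.card = m) (u : Fin m → Letter M N)
    (hu : ∀ a, u a = w (S.orderIsoOfFin hcard a)) (hm : 0 < m) :
    AdmN n hn w ↔ AdmN m hm u := by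
  constructor
  · intro h i' L'
    have ha : i' % m < m := Nat.mod_lt _ hm
    set i₀ : ℕ := ((S.orderIsoOfFin hcard ⟨i' % m, ha⟩ : Fin n) : ℕ) with hi₀
    have hc0 : cnt n hn w i₀ = i' % m := cnt_sigma n hn w S hS hcard _
    have hstep : ∀ L, cnt n hn w (i₀ + L + 1) ≤ cnt n hn w (i₀ + L) + 1 := by
      intro L
      rw [cnt_succ]
      split <;> omega
    obtain ⟨L, hL⟩ := nat_ivt (fun L => cnt n hn w (i₀ + L) - cnt n hn w i₀)
      (by simp) (fun L => by
        have h1 := hstep L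
        have h2 : cnt n hn w i₀ ≤ cnt n hn w (i₀ + L) :=
          cnt_mono n hn w (Nat.le_add_right _ _)
        simp only [← Nat.add_assoc]
        omega)
      (n * L') L' (by
        show L' ≤ cnt n hn w (i₀ + n * L') - cnt n hn w i₀
        have h3 := cnt_add_mul n hn w S hS i₀ L'
        have h4 : L' ≤ S.card * L' := by
          rw [hcard]; exact Nat.le_mul_of_pos_left L' hm
        omega)
    have hthis := h i₀ L
    have hL' : cnt n hn w (i₀ + L) - cnt n hn w i₀ = L' := hL
    rw [red_filter, filter_wrd n hn w S hS hcard u hu hm, hL', hc0] at hthis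
    have hw : wrd m hm u i' L' = wrd m hm u (i' % m) L' := by
      refine congrArg List.ofFn (funext fun k => ?_)
      show pnat m hm u (i' + (k : ℕ)) = pnat m hm u (i' % m + (k : ℕ))
      unfold pnat
      refine congrArg u (Fin.ext ?_)
      show (i' + (k : ℕ)) % m = (i' % m + (k : ℕ)) % m
      rw [Nat.mod_add_mod]
    rw [hw]
    exact hthis
  · intro h i L
    rw [red_filter, filter_wrd n hn w S hS hcard u hu hm]
    exact h _ _

lemma AdmN_of_all_neutral (n : ℕ) (hn : 0 < n) (w : Fin n → Letter M N)
    (h : ∀ i, isNeu (w i) = true) : AdmN n hn w := by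
  intro i L
  rw [red_filter]
  have hnil : (wrd n hn w i L).filter (fun a => !isNeu a) = [] := by
    rw [List.filter_eq_nil_iff]
    intro a ha
    rw [wrd, List.mem_ofFn] at ha
    obtain ⟨k, hk⟩ := ha
    rw [← hk]
    simp [pnat, h]
  rw [hnil]
  simp [red, one]

lemma AdmN_iota (m : ℕ) (hm : 0 < m) (v : Fin m → Letter M 0) :
    AdmN (N := N) m hm (fun a => iota (v a)) ↔ AdmN m hm v := by
  have hw : ∀ i L, wrd m hm (fun a => iota (N := N) (v a)) i L
      = (wrd m hm v i L).map iota := by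
    intro i L
    unfold wrd
    rw [List.map_ofFn]
    rfl
  constructor <;> intro h i L
  · have := h i L
    rwa [hw, red_map_iota] at this
  · rw [hw, red_map_iota]
    exact h i L


lemma getNeu_eq_iff (a : Letter M N) (h : isNeu a = true) (j : Fin N) :
    getNeu a h = j ↔ a = .neu j := by
  constructor
  · intro hj
    rw [← neu_getNeu a h, hj]
  · intro hj
    subst hj
    rfl

lemma deDyck_eq_iff (a : Letter M N) (h : isNeu a = false) (b : Letter M 0) :
    deDyck a h = b ↔ a = iota b := by
  constructor
  · intro hb
    rw [← iota_deDyck a h, hb]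
  · intro hb
    subst hb
    exact deDyck_iota b h

/-- The set of non-neutral positions of a word. -/
def supp (n : ℕ) (w : Fin n → Letter M N) : Finset (Fin n) :=
  Finset.univ.filter fun i => isNeu (w i) = false

lemma mem_supp_iff (n : ℕ) (w : Fin n → Letter M N) (i : Fin n) :
    i ∈ supp n w ↔ isNeu (w i) = false := by simp [supp]

lemma nat_card_subtype {α : Type*} [Fintype α] (P : α → Prop) [DecidablePred P] :
    Nat.card {x // P x} = (Finset.univ.filter P).card := by
  rw [Nat.card_eq_fintype_card, Fintype.card_subtype]

lemma card_fiber_empty (n : ℕ) (hn : 0 < n) :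
    Nat.card {w : Fin n → Letter M N // AdmN n hn w ∧ supp n w = ∅} = N ^ n := by
  have e : {w : Fin n → Letter M N // AdmN n hn w ∧ supp n w = ∅} ≃ (Fin n → Fin N) := by
    refine
      { toFun := fun w i => getNeu (w.1 i) ?_
        invFun := fun g => ⟨fun i => .neu (g i), ?_, ?_⟩
        left_inv := ?_
        right_inv := ?_ }
    · cases h : isNeu (w.1 i) with
      | true => rfl
      | false =>
        exfalso
        have : i ∈ supp n w.1 := (mem_supp_iff n w.1 i).mpr h
        rw [w.2.2] at this
        exact absurd this (Finset.notMem_empty i)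
    · exact AdmN_of_all_neutral n hn _ fun i => rfl
    · refine Finset.filter_false_of_mem ?_
      intro i _
      simp [isNeu]
    · intro w
      apply Subtype.ext
      funext i
      exact neu_getNeu _ _
    · intro g
      funext i
      rfl
  rw [Nat.card_congr e, Nat.card_eq_fintype_card, Fintype.card_fun]
  simp

lemma card_fiber_ne (n : ℕ) (hn : 0 < n) (S : Finset (Fin n)) (hSne : S ≠ ∅) :
    Nat.card {w : Fin n → Letter M N // AdmN n hn w ∧ supp n w = S}
      = N ^ (n - S.card) * p M 0 S.card := by
  have hm : 0 < S.card := Finset.card_pos.mpr (Finset.nonempty_of_ne_empty hSne)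
  set m := S.card with hmdef
  set σ := S.orderIsoOfFin (rfl : S.card = m) with hσ
  have e : {w : Fin n → Letter M N // AdmN n hn w ∧ supp n w = S}
      ≃ (({ i // i ∈ Sᶜ } → Fin N) × {v : Fin m → Letter M 0 // AdmN m hm v}) := by
    refine
      { toFun := fun w => ⟨fun i => getNeu (w.1 i) ?_, ⟨fun a => deDyck (w.1 (σ a)) ?_, ?_⟩⟩
        invFun := fun gv => ⟨fun i => if h : i ∈ S then iota (gv.2.1 (σ.symm ⟨i, h⟩))
            else Letter.neu (gv.1 ⟨i, Finset.mem_compl.mpr h⟩), ?_, ?_⟩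
        left_inv := ?_
        right_inv := ?_ }
    · -- neutral off S
      cases h : isNeu (w.1 i) with
      | true => rfl
      | false =>
        exfalso
        have hmem : (i : Fin n) ∈ supp n w.1 := (mem_supp_iff n w.1 i).mpr h
        rw [w.2.2] at hmem
        exact absurd hmem (Finset.mem_compl.mp i.2)
    · -- non-neutral on S
      have hmem : ((σ a : Fin n)) ∈ S := (σ a).2
      have := (mem_supp_iff n w.1 (σ a)).mp (by rw [w.2.2]; exact hmem)
      exact this
    · -- admissibility of the Dyck word
      have hS' : ∀ i, isNeu (w.1 i) = false ↔ i ∈ S := by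
        intro i
        have h2 : i ∈ supp n w.1 ↔ i ∈ S := by rw [w.2.2]
        exact (mem_supp_iff n w.1 i).symm.trans h2
      have hAdm : AdmN m hm (fun a => iota (N := N)
          (deDyck (w.1 (σ a)) ((mem_supp_iff n w.1 (σ a)).mp (by rw [w.2.2]; exact (σ a).2)))) := by
        have heq : (fun a => iota (N := N)
            (deDyck (w.1 (σ a)) ((mem_supp_iff n w.1 (σ a)).mp (by rw [w.2.2]; exact (σ a).2))))
            = fun a => w.1 (σ a) := by
          funext a
          exact iota_deDyck _ _
        rw [heq]
        exact (AdmN_iff_AdmN_sub n hn w.1 S hS' rfl _ (fun a => rfl) hm).mp w.2.1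
      exact (AdmN_iota m hm _).mp hAdm
    · -- admissibility of assembled word
      set w' := fun i => if h : i ∈ S then iota (N := N) (gv.2.1 (σ.symm ⟨i, h⟩))
        else Letter.neu (gv.1 ⟨i, Finset.mem_compl.mpr h⟩) with hw'
      have hS' : ∀ i, isNeu (w' i) = false ↔ i ∈ S := by
        intro i
        by_cases h : i ∈ S
        · rw [hw']
          simp only [dif_pos h]
          simp [isNeu_iota, h]
        · rw [hw']
          simp only [dif_neg h]
          simp [isNeu, h]
      have hu : ∀ a, w' ((σ a : Fin n)) = iota (N := N) (gv.2.1 a) := by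
        intro a
        rw [hw']
        simp only [dif_pos (σ a).2]
        congr 1
        rw [Subtype.coe_eta, OrderIso.symm_apply_apply]
      refine (AdmN_iff_AdmN_sub n hn w' S hS' rfl (fun a => w' (σ a)) (fun a => rfl) hm).mpr ?_
      have : (fun a => w' ((σ a : Fin n))) = fun a => iota (N := N) (gv.2.1 a) := funext hu
      rw [this]
      exact (AdmN_iota m hm _).mpr gv.2.2
    · -- support of assembled word
      ext i
      rw [mem_supp_iff]
      by_cases h : i ∈ S
      · simp only [dif_pos h]
        simp [isNeu_iota, h]
      · simp only [dif_neg h]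
        simp [isNeu, h]
    · -- left inverse
      intro w
      apply Subtype.ext
      funext i
      by_cases h : i ∈ S
      · simp only [dif_pos h]
        rw [iota_deDyck]
        congr 1
        rw [OrderIso.apply_symm_apply]
      · simp only [dif_neg h]
        exact neu_getNeu _ _
    · -- right inverse
      intro gv
      refine Prod.ext ?_ ?_
      · funext i
        show getNeu _ _ = gv.1 i
        rw [getNeu_eq_iff]
        have h : (i : Fin n) ∉ S := Finset.mem_compl.mp i.2
        simp only [dif_neg h]
      · apply Subtype.ext
        funext a
        show deDyck _ _ = gv.2.1 a
        rw [deDyck_eq_iff]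
        simp only [dif_pos (σ a).2]
        congr 1
        rw [Subtype.coe_eta, OrderIso.symm_apply_apply]
  rw [Nat.card_congr e, Nat.card_prod, Nat.card_eq_fintype_card, Fintype.card_fun,
    Fintype.card_coe, Finset.card_compl, Fintype.card_fin, Fintype.card_fin,
    p_eq_card_AdmN m hm]

lemma card_split (n : ℕ) (hn : 0 < n) :
    Nat.card {w : Fin n → Letter M N // AdmN n hn w}
      = ∑ S : Finset (Fin n),
          Nat.card {w : Fin n → Letter M N // AdmN n hn w ∧ supp n w = S} := by
  classical
  rw [nat_card_subtype]
  rw [Finset.card_eq_sum_card_fiberwise (f := fun w => supp n w)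
    (t := Finset.univ) (fun x _ => Finset.mem_univ _)]
  refine Finset.sum_congr rfl fun S _ => ?_
  rw [nat_card_subtype, Finset.filter_filter]

lemma card_AdmN_total (n : ℕ) (hn : 0 < n) :
    Nat.card {w : Fin n → Letter M N // AdmN n hn w}
      = N ^ n + ∑ S ∈ (Finset.univ : Finset (Finset (Fin n))).erase ∅,
          N ^ (n - S.card) * p M 0 S.card := by
  classical
  rw [card_split n hn]
  rw [← Finset.add_sum_erase _ _ (Finset.mem_univ (∅ : Finset (Fin n)))]
  rw [card_fiber_empty n hn]
  congr 1
  refine Finset.sum_congr rfl fun S hSmem => ?_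
  exact card_fiber_ne n hn S (Finset.mem_erase.mp hSmem).1

end MotzkinPaper

open MotzkinPaper in
/-- The number of `n`-periodic points of the Motzkin shift is expressed through those
of the Dyck shift: `p_n(M(M,N)) = ∑_{i=0}^{n−1} C(n,i) Nⁱ p_{n−i}(D_M) + Nⁿ`. -/
theorem motzkin_periodic_points_via_dyck (M N n : ℕ) (hM : 1 ≤ M) (hN : 1 ≤ N) (hn : 1 ≤ n) :
    p M N n = (∑ i ∈ Finset.range n, n.choose i * N ^ i * p M 0 (n - i)) + N ^ n := by
  classical
  have hn0 : 0 < n := hn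
  rw [p_eq_card_AdmN (M := M) (N := N) n hn0, card_AdmN_total n hn0, Nat.add_comm]
  congr 1
  have h1 : ∑ S ∈ (Finset.univ : Finset (Finset (Fin n))).erase ∅,
        N ^ (n - S.card) * p M 0 S.card
      = ∑ m ∈ Finset.Icc 1 n, n.choose m * (N ^ (n - m) * p M 0 m) := by
    rw [← Finset.sum_fiberwise_of_maps_to (g := fun S : Finset (Fin n) => S.card)
      (t := Finset.Icc 1 n) ?_ (fun S => N ^ (n - S.card) * p M 0 S.card)]
    swap
    · intro S hSmem
      rw [Finset.mem_Icc]
      have h2 : S ≠ ∅ := (Finset.mem_erase.mp hSmem).1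
      have h3 := Finset.card_pos.mpr (Finset.nonempty_of_ne_empty h2)
      have h4 : S.card ≤ n := by
        have := Finset.card_le_univ S
        simpa [Finset.card_fin] using this
      omega
    refine Finset.sum_congr rfl fun m hm => ?_
    rw [Finset.mem_Icc] at hm
    have hconst : ∀ S ∈ ((Finset.univ : Finset (Finset (Fin n))).erase ∅).filter
        (fun S => S.card = m),
        N ^ (n - S.card) * p M 0 S.card = N ^ (n - m) * p M 0 m := by
      intro S hSmem
      rw [(Finset.mem_filter.mp hSmem).2]
    rw [Finset.sum_congr rfl hconst, Finset.sum_const, smul_eq_mul]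
    congr 1
    have hfe : ((Finset.univ : Finset (Finset (Fin n))).erase ∅).filter (fun S => S.card = m)
        = Finset.powersetCard m (Finset.univ : Finset (Fin n)) := by
      rw [Finset.powersetCard_eq_filter, Finset.powerset_univ]
      ext S
      constructor
      · intro hmem
        exact Finset.mem_filter.mpr ⟨Finset.mem_univ S, (Finset.mem_filter.mp hmem).2⟩
      · intro hmem
        have h2 : S.card = m := (Finset.mem_filter.mp hmem).2
        refine Finset.mem_filter.mpr ⟨Finset.mem_erase.mpr ⟨?_, Finset.mem_univ S⟩, h2⟩
        intro hemp
        rw [hemp] at h2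
        simp at h2
        omega
    rw [hfe, Finset.card_powersetCard, Finset.card_fin]
  rw [h1]
  refine Finset.sum_nbij' (fun m => n - m) (fun i => n - i) ?_ ?_ ?_ ?_ ?_
  · intro m hm
    rw [Finset.mem_Icc] at hm
    rw [Finset.mem_range]
    omega
  · intro i hi
    rw [Finset.mem_range] at hi
    rw [Finset.mem_Icc]
    omega
  · intro m hm
    rw [Finset.mem_Icc] at hm
    omega
  · intro i hi
    rw [Finset.mem_range] at hi
    omega
  · intro m hm
    rw [Finset.mem_Icc] at hm
    have e1 : n - (n - m) = m := by omega
    rw [e1, Nat.choose_symm hm.2, Nat.mul_assoc]
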